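/- Let n ≥ 1, let φ ∈ L^∞(𝕋^n) be nonzero, and suppose the Toeplitz operator T_φ on H²(𝔻^n) is a partial isometry. Then for every f in the range of T_φ, the function φ̄ f belongs to H²(𝕋^n); that is, all Fourier coefficients of φ̄ f with index outside ℤ₊^n vanish. -/

import Mathlib

noncomputable section

open MeasureTheory Complex Filter Topology ContinuousLinearMap

/-- The `n`-torus `𝕋^n`, with its (normalized, since `T = 1`) Haar measure. -/
abbrev Torus (n : ℕ) : Type := Fin n → UnitAddCircle

/-- The Lebesgue space `L²(𝕋^n)`. -/
abbrev L2T (n : ℕ) : Type := Lp ℂ 2 (volume : Measure (Torus n))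

/-- The character `z ↦ z^k` on the `n`-torus, `k ∈ ℤ^n`. -/
def charFn (n : ℕ) (k : Fin n → ℤ) : Torus n → ℂ := fun z => ∏ i, fourier (k i) (z i)

theorem charFn_continuous (n : ℕ) (k : Fin n → ℤ) : Continuous (charFn n k) :=
  continuous_finset_prod _ fun i _ => (map_continuous (fourier (k i))).comp (continuous_apply i)

theorem charFn_norm (n : ℕ) (k : Fin n → ℤ) (z : Torus n) : ‖charFn n k z‖ = 1 := by
  rw [charFn, norm_prod]
  exact Finset.prod_eq_one fun i _ => Circle.norm_coe _

theorem charFn_memℒp (n : ℕ) (k : Fin n → ℤ) :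
    MemLp (charFn n k) ⊤ (volume : Measure (Torus n)) :=
  memLp_top_of_bound (charFn_continuous n k).aestronglyMeasurable 1
    (Eventually.of_forall fun z => le_of_eq (charFn_norm n k z))

/-- The `k`-th Fourier coefficient `f̂(k) = ∫_{𝕋^n} (conj z^k) f(z) dm(z)`. -/
def mFourierCoeff {n : ℕ} (f : Torus n → ℂ) (k : Fin n → ℤ) : ℂ :=
  ∫ z, (starRingEnd ℂ) (charFn n k z) * f z

theorem mFourierCoeff_congr {n : ℕ} {f g : Torus n → ℂ}
    (h : f =ᵐ[(volume : Measure (Torus n))] g) (k : Fin n → ℤ) :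
    mFourierCoeff f k = mFourierCoeff g k :=
  integral_congr_ae (h.mono fun z hz => by simp only [hz])

theorem integrable_char_mul (n : ℕ) (k : Fin n → ℤ) (f : L2T n) :
    Integrable (fun z => (starRingEnd ℂ) (charFn n k z) * f z)
      (volume : Measure (Torus n)) := by
  have hf : Integrable (⇑f) (volume : Measure (Torus n)) := (Lp.memLp f).integrable one_le_two
  refine hf.bdd_mul (c := 1) ?_ (Eventually.of_forall fun z => ?_)
  · exact (continuous_star.comp (charFn_continuous n k)).aestronglyMeasurable
  · rw [starRingEnd_apply, norm_star, charFn_norm]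

theorem mFourierCoeff_add {n : ℕ} (k : Fin n → ℤ) (f g : L2T n) :
    mFourierCoeff (⇑(f + g)) k = mFourierCoeff (⇑f) k + mFourierCoeff (⇑g) k := by
  rw [mFourierCoeff_congr (Lp.coeFn_add f g) k]
  unfold mFourierCoeff
  simp only [Pi.add_apply, mul_add]
  exact integral_add (integrable_char_mul n k f) (integrable_char_mul n k g)

theorem mFourierCoeff_smul {n : ℕ} (k : Fin n → ℤ) (c : ℂ) (f : L2T n) :
    mFourierCoeff (⇑(c • f)) k = c * mFourierCoeff (⇑f) k := by
  rw [mFourierCoeff_congr (Lp.coeFn_smul c f) k]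
  unfold mFourierCoeff
  have : (fun z => (starRingEnd ℂ) (charFn n k z) * (c • ⇑f) z) =
      fun z => c • ((starRingEnd ℂ) (charFn n k z) * f z) := by
    funext z; simp only [Pi.smul_apply, smul_eq_mul]; ring
  rw [this, integral_smul, smul_eq_mul]

/-- All Fourier coefficients with some negative index vanish (membership in the "analytic"
part, e.g. `H²(𝕋^n)` resp. `H^∞(𝔻^n)` for `L²` resp. `L^∞` functions). -/
def IsAnalyticSymbol {n : ℕ} (φ : Torus n → ℂ) : Prop :=
  ∀ k : Fin n → ℤ, (∃ i, k i < 0) → mFourierCoeff φ k = 0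

/-- `φ ∈ H^∞(𝔻^n) = L^∞(𝕋^n) ∩ H²(𝕋^n)`. -/
def IsHinfty {n : ℕ} (φ : Torus n → ℂ) : Prop :=
  MemLp φ ⊤ (volume : Measure (Torus n)) ∧ IsAnalyticSymbol φ

/-- `φ` is an inner function in `H^∞(𝔻^n)`: it is in `H^∞` and unimodular a.e. on `𝕋^n`. -/
def IsInnerFn {n : ℕ} (φ : Torus n → ℂ) : Prop :=
  IsHinfty φ ∧ ∀ᵐ z ∂(volume : Measure (Torus n)), ‖φ z‖ = 1

/-- `φ` depends only on the variables in `A`: `φ̂(k) = 0` whenever `k j ≠ 0` for some `j ∉ A`. -/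
def DependsOnlyOn {n : ℕ} (φ : Torus n → ℂ) (A : Set (Fin n)) : Prop :=
  ∀ k : Fin n → ℤ, (∃ j, j ∉ A ∧ k j ≠ 0) → mFourierCoeff φ k = 0

/-- The Hardy space `H²(𝔻^n) ≅ H²(𝕋^n)` as a subspace of `L²(𝕋^n)`. -/
def hardySpace (n : ℕ) : Submodule ℂ (L2T n) where
  carrier := {f : L2T n | ∀ k : Fin n → ℤ, (∃ i, k i < 0) → mFourierCoeff (⇑f) k = 0}
  add_mem' := by
    intro a b ha hb k hk
    rw [mFourierCoeff_add k a b, ha k hk, hb k hk, add_zero]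
  zero_mem' := by
    intro k hk
    rw [mFourierCoeff_congr (Lp.coeFn_zero ℂ 2 (volume : Measure (Torus _))) k]
    simp [mFourierCoeff]
  smul_mem' := by
    intro c a ha k hk
    rw [mFourierCoeff_smul k c a, ha k hk, mul_zero]

/-- The character `z^k` as an element of `L²(𝕋^n)`. -/
def charLp2 (n : ℕ) (k : Fin n → ℤ) : L2T n :=
  MemLp.toLp (charFn n k) ((charFn_memℒp n k).mono_exponent le_top)

theorem mFourierCoeff_eq_inner (n : ℕ) (k : Fin n → ℤ) (f : L2T n) :
    mFourierCoeff (⇑f) k = @inner ℂ _ _ (charLp2 n k) f := by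
  rw [mFourierCoeff, MeasureTheory.L2.inner_def]
  apply integral_congr_ae
  have hcoe : ⇑(charLp2 n k) =ᵐ[(volume : Measure (Torus n))] charFn n k :=
    MemLp.coeFn_toLp _
  filter_upwards [hcoe] with z hz
  rw [RCLike.inner_apply, hz, mul_comm]

theorem hardySpace_isClosed (n : ℕ) :
    IsClosed ((hardySpace n : Submodule ℂ (L2T n)) : Set (L2T n)) := by
  have h : ((hardySpace n : Submodule ℂ (L2T n)) : Set (L2T n)) =
      ⋂ k ∈ {k : Fin n → ℤ | ∃ i, k i < 0},
        {f : L2T n | @inner ℂ _ _ (charLp2 n k) f = 0} := by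
    ext f
    simp only [Set.mem_iInter, Set.mem_setOf_eq, SetLike.mem_coe]
    constructor
    · intro hf k hk
      rw [← mFourierCoeff_eq_inner]; exact hf k hk
    · intro hf k hk
      rw [mFourierCoeff_eq_inner]; exact hf k hk
  rw [h]
  exact isClosed_biInter fun k _ =>
    isClosed_eq (Continuous.inner continuous_const continuous_id) continuous_const

instance hardySpace_completeSpace (n : ℕ) : CompleteSpace (hardySpace n) :=
  (hardySpace_isClosed n).completeSpace_coe

/-- The Hardy space as a Hilbert space. -/
abbrev HardyH (n : ℕ) := ↥(hardySpace n)

/-- The representative function of an element of the Hardy space. -/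
def repFn {n : ℕ} (f : HardyH n) : Torus n → ℂ := ⇑(f : L2T n)

theorem mul_memℒp {n : ℕ} {φ : Torus n → ℂ} (hφ : MemLp φ ⊤ (volume : Measure (Torus n)))
    (f : L2T n) : MemLp (fun z => φ z * f z) 2 (volume : Measure (Torus n)) := by
  have h := MemLp.smul (r := 2) hφ (Lp.memLp f)
  have e : (⇑f • φ) = fun z => φ z * f z := by
    funext z
    simp only [Pi.smul_apply', smul_eq_mul]
    ring
  rwa [e] at h

/-- Multiplication by `φ ∈ L^∞(𝕋^n)` as a map on `L²(𝕋^n)`. -/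
def mulL2 {n : ℕ} (φ : Torus n → ℂ) (hφ : MemLp φ ⊤ (volume : Measure (Torus n)))
    (f : L2T n) : L2T n :=
  MemLp.toLp (fun z => φ z * f z) (mul_memℒp hφ f)

/-- `IsToeplitz φ hφ T` : `T` is the Toeplitz operator on `H²(𝔻^n)` with symbol
`φ ∈ L^∞(𝕋^n)`, i.e. `T f = P(φ f)` where `P` is the orthogonal projection onto `H²`. -/
def IsToeplitz {n : ℕ} (φ : Torus n → ℂ) (hφ : MemLp φ ⊤ (volume : Measure (Torus n)))
    (T : HardyH n →L[ℂ] HardyH n) : Prop :=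
  ∀ f : HardyH n, T f = Submodule.orthogonalProjectionOnto (hardySpace n) (mulL2 φ hφ (f : L2T n))

/-- `IsMulOp φ T` : `T` is the multiplication operator `M_φ` on `H²(𝔻^n)`. -/
def IsMulOp {n : ℕ} (φ : Torus n → ℂ) (T : HardyH n →L[ℂ] HardyH n) : Prop :=
  ∀ f : HardyH n, repFn (T f) =ᵐ[(volume : Measure (Torus n))] fun z => φ z * repFn f z

/-- A bounded operator is a partial isometry if it is isometric on the orthogonal
complement of its kernel. -/
def IsPartialIsometryOp {E F : Type*} [NormedAddCommGroup E] [InnerProductSpace ℂ E]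
    [NormedAddCommGroup F] [NormedSpace ℂ F] (T : E →L[ℂ] F) : Prop :=
  ∀ x ∈ (LinearMap.ker (T : E →ₗ[ℂ] F))ᗮ, ‖T x‖ = ‖x‖

/-- Hyponormality: `T*T - TT* ≥ 0`. -/
def IsHyponormal {H : Type*} [NormedAddCommGroup H] [InnerProductSpace ℂ H] [CompleteSpace H]
    (T : H →L[ℂ] H) : Prop :=
  (ContinuousLinearMap.adjoint T ∘L T - T ∘L ContinuousLinearMap.adjoint T).IsPositive

/-- A shift: an isometry whose adjoint powers tend to `0` strongly. -/
def IsShiftOp {H : Type*} [NormedAddCommGroup H] [InnerProductSpace ℂ H] [CompleteSpace H]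
    (V : H →L[ℂ] H) : Prop :=
  Isometry V ∧ ∀ x : H, Tendsto (fun m : ℕ => ((ContinuousLinearMap.adjoint V) ^ m) x) atTop (nhds 0)

/-- `g ∈ θ · H²(𝔻^n)`, i.e. `g = θ h` a.e. for some `h ∈ H²(𝔻^n)`. -/
def InMulRange {n : ℕ} (θ : Torus n → ℂ) (g : HardyH n) : Prop :=
  ∃ h : HardyH n, repFn g =ᵐ[(volume : Measure (Torus n))] fun z => θ z * repFn h z

/-- `P` is the orthogonal projection of `H²(𝔻^n)` onto `θ H²(𝔻^n)`. -/
def IsOrthProjOntoMul {n : ℕ} (P : HardyH n →L[ℂ] HardyH n) (θ : Torus n → ℂ) : Prop :=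
  IsIdempotentElem P ∧ IsSelfAdjoint P ∧
    ∀ g : HardyH n, g ∈ LinearMap.range (P : HardyH n →ₗ[ℂ] HardyH n) ↔ InMulRange θ g

/-! ### Auxiliary development -/

theorem unit_volume_eq_haar :
    (volume : Measure UnitAddCircle) = AddCircle.haarAddCircle := by
  rw [AddCircle.volume_eq_smul_haarAddCircle, ENNReal.ofReal_one, one_smul]

theorem integral_fourier_unit (m : ℤ) :
    (∫ z : UnitAddCircle, fourier m z) = if m = 0 then 1 else 0 := by
  split_ifs with h
  · simp [h, fourier_zero, Measure.real, AddCircle.measure_univ]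
  · rw [unit_volume_eq_haar]
    exact integral_eq_zero_of_add_right_eq_neg (fourier_add_half_inv_index h one_pos)

theorem integral_charFn (n : ℕ) (k : Fin n → ℤ) :
    (∫ z : Torus n, charFn n k z) = if k = 0 then 1 else 0 := by
  have : (∫ z : Torus n, charFn n k z)
      = ∏ i, ∫ x : UnitAddCircle, fourier (k i) x := by
    simpa [charFn] using
      MeasureTheory.integral_fintype_prod_volume_eq_prod (𝕜 := ℂ)
        (f := fun i (x : UnitAddCircle) => (fourier (k i) x : ℂ))
  rw [this]
  split_ifs with h
  · subst h; simp [integral_fourier_unit, Measure.real, AddCircle.measure_univ]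
  · obtain ⟨i, hi⟩ : ∃ i, k i ≠ 0 := by
      by_contra hc
      push_neg at hc
      exact h (funext hc)
    exact Finset.prod_eq_zero (Finset.mem_univ i)
      (by rw [integral_fourier_unit, if_neg hi])

theorem charFn_conj_mul (n : ℕ) (k l : Fin n → ℤ) (z : Torus n) :
    (starRingEnd ℂ) (charFn n k z) * charFn n l z = charFn n (l - k) z := by
  simp only [charFn, map_prod, ← Finset.prod_mul_distrib]
  refine Finset.prod_congr rfl fun i _ => ?_
  rw [← fourier_neg, ← fourier_add]
  congr 1
  simp [sub_eq_add_neg, add_comm]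

theorem inner_charLp2 (n : ℕ) (k l : Fin n → ℤ) :
    (inner ℂ (charLp2 n k) (charLp2 n l) : ℂ) = if k = l then 1 else 0 := by
  rw [MeasureTheory.L2.inner_def]
  have h1 : (∫ z, (inner ℂ ((charLp2 n k : L2T n) z) ((charLp2 n l : L2T n) z) : ℂ))
      = ∫ z, charFn n (l - k) z := by
    refine integral_congr_ae ?_
    have hk : ⇑(charLp2 n k) =ᵐ[(volume : Measure (Torus n))] charFn n k :=
      MemLp.coeFn_toLp _
    have hl : ⇑(charLp2 n l) =ᵐ[(volume : Measure (Torus n))] charFn n l :=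
      MemLp.coeFn_toLp _
    filter_upwards [hk, hl] with z h1 h2
    rw [h1, h2, RCLike.inner_apply, mul_comm, charFn_conj_mul]
  rw [h1, integral_charFn]
  by_cases h : k = l
  · simp [h]
  · rw [if_neg (fun hc => h (sub_eq_zero.mp hc).symm), if_neg h]

theorem orthonormal_charLp2 (n : ℕ) : Orthonormal ℂ (charLp2 n) := by
  rw [orthonormal_iff_ite]
  intro k l
  rw [inner_charLp2]

theorem key_identity {ι : Type*} {E : Type*} [NormedAddCommGroup E]
    [InnerProductSpace ℂ E] (e : ι → E) (he : Orthonormal ℂ e) (v : E) (F : Finset ι) :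
    ‖v - ∑ i ∈ F, (inner ℂ (e i) v : ℂ) • e i‖ ^ 2
      = ‖v‖ ^ 2 - ∑ i ∈ F, ‖(inner ℂ (e i) v : ℂ)‖ ^ 2 := by
  classical
  set w := ∑ i ∈ F, (inner ℂ (e i) v : ℂ) • e i with hw
  have hw2 : ‖w‖ ^ 2 = ∑ i ∈ F, ‖(inner ℂ (e i) v : ℂ)‖ ^ 2 := by
    simpa using he.orthogonalFamily.norm_sum (fun i => (inner ℂ (e i) v : ℂ)) F
  have hvw : (inner ℂ v w : ℂ) = ∑ i ∈ F, (‖(inner ℂ (e i) v : ℂ)‖ : ℂ) ^ 2 := by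
    rw [hw, inner_sum]
    refine Finset.sum_congr rfl fun i _ => ?_
    rw [inner_smul_right, ← inner_conj_symm v (e i), RCLike.mul_conj]
    norm_cast
  have hre : RCLike.re (inner ℂ v w : ℂ) = ∑ i ∈ F, ‖(inner ℂ (e i) v : ℂ)‖ ^ 2 := by
    rw [hvw]
    norm_cast
  rw [@norm_sub_sq ℂ, hre, hw2]
  ring

theorem norm_sq_le_tsum_inner {ι : Type*} {E : Type*} [NormedAddCommGroup E]
    [InnerProductSpace ℂ E] (e : ι → E) (he : Orthonormal ℂ e) (v : E)
    (hv : v ∈ (Submodule.span ℂ (Set.range e)).topologicalClosure) :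
    ‖v‖ ^ 2 ≤ ∑' i, ‖(inner ℂ (e i) v : ℂ)‖ ^ 2 := by
  classical
  have hsum : Summable fun i => ‖(inner ℂ (e i) v : ℂ)‖ ^ 2 := he.inner_products_summable v
  refine le_of_forall_pos_le_add fun ε hε => ?_
  -- find an approximant `s` in the span with `‖v - s‖ ^ 2 < ε`
  have hv' : v ∈ closure ((Submodule.span ℂ (Set.range e) : Submodule ℂ E) : Set E) := hv
  rw [Metric.mem_closure_iff] at hv'
  obtain ⟨s, hs, hds⟩ := hv' (Real.sqrt ε) (Real.sqrt_pos.mpr hε)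
  obtain ⟨m, c, x, rfl⟩ := Submodule.mem_span_set'.mp hs
  set j : Fin m → ι := fun i => (x i).2.choose with hj
  have hjx : ∀ i, e (j i) = (x i : E) := fun i => (x i).2.choose_spec
  set F : Finset ι := Finset.image j Finset.univ with hF
  set s := ∑ i, c i • (x i : E) with hsdef
  set w := ∑ i ∈ F, (inner ℂ (e i) v : ℂ) • e i with hw
  have hsmem : s ∈ Submodule.span ℂ (e '' ↑F) := by
    refine Submodule.sum_mem _ fun i _ => Submodule.smul_mem _ _ (Submodule.subset_span ?_)
    exact ⟨j i, by simp [hF], hjx i⟩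
  have hwmem : w ∈ Submodule.span ℂ (e '' ↑F) := by
    refine Submodule.sum_mem _ fun i hi => Submodule.smul_mem _ _ (Submodule.subset_span ?_)
    exact ⟨i, hi, rfl⟩
  have horth : ∀ y ∈ Submodule.span ℂ (e '' ↑F), (inner ℂ y (v - w) : ℂ) = 0 := by
    intro y hy
    induction hy using Submodule.span_induction with
    | mem y hy =>
      obtain ⟨i, hi, rfl⟩ := hy
      rw [inner_sub_right, hw, he.inner_right_sum _ hi, sub_self]
    | zero => exact inner_zero_left _
    | add y z _ _ hy hz => rw [inner_add_left, hy, hz, add_zero]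
    | smul c y _ hy => rw [inner_smul_left, hy, mul_zero]
  -- best approximation: `‖v - w‖ ≤ ‖v - s‖`
  have hbest : ‖v - w‖ ^ 2 ≤ ‖v - s‖ ^ 2 := by
    have h0 : (inner ℂ (s - w) (v - w) : ℂ) = 0 :=
      horth _ (Submodule.sub_mem _ hsmem hwmem)
    have hvs : v - s = v - w - (s - w) := by abel
    have expand : ‖v - w - (s - w)‖ ^ 2
        = ‖v - w‖ ^ 2 - 2 * RCLike.re (inner ℂ (v - w) (s - w) : ℂ) + ‖s - w‖ ^ 2 :=
      @norm_sub_sq ℂ _ _ _ _ (v - w) (s - w)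
    have hre0 : RCLike.re (inner ℂ (v - w) (s - w) : ℂ) = 0 := by
      rw [← inner_conj_symm (v - w) (s - w), h0]
      simp
    rw [hvs, expand, hre0]
    nlinarith [sq_nonneg (‖s - w‖)]
  have hid := key_identity e he v F
  have hFle : ∑ i ∈ F, ‖(inner ℂ (e i) v : ℂ)‖ ^ 2 ≤ ∑' i, ‖(inner ℂ (e i) v : ℂ)‖ ^ 2 :=
    Summable.sum_le_tsum F (fun i _ => sq_nonneg _) hsum
  have hvs2 : ‖v - s‖ ^ 2 < ε := by
    have h1 : ‖v - s‖ < Real.sqrt ε := by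
      simpa [dist_eq_norm] using hds
    have h2 : ‖v - s‖ ^ 2 < Real.sqrt ε ^ 2 := by
      have := norm_nonneg (v - s)
      nlinarith
    rwa [Real.sq_sqrt hε.le] at h2
  nlinarith [hid, hbest, hFle, hvs2]

/-! ### The Hardy space as an orthogonal complement -/

/-- Indices with a negative coordinate. -/
def badSet (n : ℕ) : Set (Fin n → ℤ) := {k | ∃ i, k i < 0}

/-- The "bad" characters, spanning the orthocomplement of `H²`. -/
def badChar (n : ℕ) : badSet n → L2T n := fun k => charLp2 n k

theorem orthonormal_badChar (n : ℕ) : Orthonormal ℂ (badChar n) :=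
  (orthonormal_charLp2 n).comp _ Subtype.val_injective

theorem hardySpace_eq_orthogonal (n : ℕ) :
    hardySpace n = (Submodule.span ℂ (Set.range (badChar n)))ᗮ := by
  ext f
  rw [Submodule.mem_orthogonal]
  constructor
  · intro hf u hu
    induction hu using Submodule.span_induction with
    | mem u hu =>
      obtain ⟨k, rfl⟩ := hu
      show (inner ℂ (charLp2 n k) f : ℂ) = 0
      rw [← mFourierCoeff_eq_inner]
      exact hf k k.2
    | zero => exact inner_zero_left _
    | add y z _ _ hy hz => rw [inner_add_left, hy, hz, add_zero]
    | smul c y _ hy => rw [inner_smul_left, hy, mul_zero]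
  · intro hf k hk
    rw [mFourierCoeff_eq_inner]
    exact hf _ (Submodule.subset_span ⟨⟨k, hk⟩, rfl⟩)

theorem hardySpace_orthogonal_eq_closure (n : ℕ) :
    (hardySpace n)ᗮ = (Submodule.span ℂ (Set.range (badChar n))).topologicalClosure := by
  rw [hardySpace_eq_orthogonal, Submodule.orthogonal_orthogonal_eq_closure]

/-! ### Multiplication by characters -/

theorem charFn_conj (n : ℕ) (k : Fin n → ℤ) (z : Torus n) :
    (starRingEnd ℂ) (charFn n k z) = charFn n (-k) z := by
  have := charFn_conj_mul n k 0 z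
  have h0 : charFn n 0 z = 1 := by
    simp [charFn, fourier_zero]
  rw [h0, mul_one] at this
  simpa using this

theorem mulL2_coeFn {n : ℕ} (φ : Torus n → ℂ) (hφ : MemLp φ ⊤ (volume : Measure (Torus n)))
    (f : L2T n) :
    ⇑(mulL2 φ hφ f) =ᵐ[(volume : Measure (Torus n))] fun z => φ z * f z :=
  MemLp.coeFn_toLp _

/-- Multiplication by the character `z^N` on `L²`. -/
def mulChar {n : ℕ} (N : Fin n → ℤ) (f : L2T n) : L2T n :=
  mulL2 (charFn n N) (charFn_memℒp n N) f

theorem mulChar_coeFn {n : ℕ} (N : Fin n → ℤ) (f : L2T n) :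
    ⇑(mulChar N f) =ᵐ[(volume : Measure (Torus n))] fun z => charFn n N z * f z :=
  mulL2_coeFn _ _ f

theorem mFourierCoeff_mulChar {n : ℕ} (N : Fin n → ℤ) (f : L2T n) (k : Fin n → ℤ) :
    mFourierCoeff (⇑(mulChar N f)) k = mFourierCoeff (⇑f) (k - N) := by
  rw [mFourierCoeff_congr (mulChar_coeFn N f) k]
  unfold mFourierCoeff
  refine integral_congr_ae (Eventually.of_forall fun z => ?_)
  show (starRingEnd ℂ) (charFn n k z) * (charFn n N z * f z)
      = (starRingEnd ℂ) (charFn n (k - N) z) * f z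
  have h1 : (starRingEnd ℂ) (charFn n k z) * (charFn n N z * f z)
      = ((starRingEnd ℂ) (charFn n k z) * charFn n N z) * f z := by ring
  rw [h1, charFn_conj_mul, charFn_conj, neg_sub]

theorem inner_charLp2_mulChar {n : ℕ} (N : Fin n → ℤ) (f : L2T n) (k : Fin n → ℤ) :
    (inner ℂ (charLp2 n k) (mulChar N f) : ℂ) = inner ℂ (charLp2 n (k - N)) f := by
  rw [← mFourierCoeff_eq_inner, ← mFourierCoeff_eq_inner, mFourierCoeff_mulChar]

theorem norm_mulChar {n : ℕ} (N : Fin n → ℤ) (f : L2T n) : ‖mulChar N f‖ = ‖f‖ := by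
  rw [Lp.norm_def, Lp.norm_def]
  congr 1
  rw [eLpNorm_congr_ae (mulChar_coeFn N f)]
  refine eLpNorm_congr_norm_ae (Eventually.of_forall fun z => ?_)
  rw [norm_mul, charFn_norm, one_mul]

theorem mulChar_mem_hardy {n : ℕ} (m : ℕ) {f : L2T n} (hf : f ∈ hardySpace n) :
    mulChar (fun _ => (m : ℤ)) f ∈ hardySpace n := by
  intro k hk
  rw [mFourierCoeff_mulChar]
  refine hf _ ?_
  obtain ⟨i, hi⟩ := hk
  exact ⟨i, by simp only [Pi.sub_apply]; omega⟩

theorem multiplier_norm_le {n : ℕ} (φ : Torus n → ℂ)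
    (hφ : MemLp φ ⊤ (volume : Measure (Torus n)))
    (T : HardyH n →L[ℂ] HardyH n) (hT : IsToeplitz φ hφ T) (hTnorm : ‖T‖ ≤ 1)
    (f : HardyH n) : ‖mulL2 φ hφ (f : L2T n)‖ ≤ ‖(f : L2T n)‖ := by
  classical
  set u := mulL2 φ hφ (f : L2T n) with hu
  have key : ∀ ε > (0:ℝ), ‖u‖ ^ 2 ≤ ‖(f : L2T n)‖ ^ 2 + ε := by
    intro ε hε
    set a : (Fin n → ℤ) → ℝ := fun k => ‖(inner ℂ (charLp2 n k) u : ℂ)‖ ^ 2 with hadef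
    have ha : Summable a := (orthonormal_charLp2 n).inner_products_summable u
    obtain ⟨F, hF⟩ := (ha.hasSum.eventually (Metric.ball_mem_nhds (∑' k, a k) hε)).exists
    have htail : ∑' (x : ↑((↑F : Set (Fin n → ℤ))ᶜ)), a ↑x < ε := by
      have hc := Summable.sum_add_tsum_compl (s := F) ha
      have hd : |∑ k ∈ F, a k - ∑' k, a k| < ε := by
        simpa [Metric.mem_ball, Real.dist_eq] using hF
      have hnn : (0:ℝ) ≤ ∑' (x : ↑((↑F : Set (Fin n → ℤ))ᶜ)), a ↑x :=
        tsum_nonneg fun _ => sq_nonneg _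
      rw [abs_lt] at hd
      linarith [hc]
    set M : ℕ := (F.sup fun k => Finset.univ.sup fun i => (k i).natAbs) + 1 with hM
    have hMlt : ∀ k ∈ F, ∀ i, -(M:ℤ) < k i := by
      intro k hk i
      have h1 : (k i).natAbs ≤ Finset.univ.sup fun i => (k i).natAbs :=
        Finset.le_sup (f := fun i => (k i).natAbs) (Finset.mem_univ i)
      have h2 : (Finset.univ.sup fun i => (k i).natAbs)
          ≤ F.sup fun k => Finset.univ.sup fun i => (k i).natAbs :=
        Finset.le_sup (f := fun k => Finset.univ.sup fun i => (k i).natAbs) hk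
      have h3 : ((k i).natAbs : ℤ) < (M : ℤ) := by
        rw [hM]
        exact_mod_cast Nat.lt_succ_of_le (h1.trans h2)
      have h4 : -((k i).natAbs : ℤ) ≤ k i := by
        rw [← Int.abs_eq_natAbs]
        exact neg_abs_le (k i)
      linarith
    set N : Fin n → ℤ := fun _ => (M:ℤ) with hN
    set fs : HardyH n := ⟨mulChar N (f : L2T n), mulChar_mem_hardy M f.2⟩ with hfs
    set w : L2T n := mulChar N u with hwdef
    have hwu : mulL2 φ hφ (fs : L2T n) = w := by
      refine (MemLp.toLp_eq_toLp_iff (mul_memℒp hφ _) (mul_memℒp (charFn_memℒp n N) u)).mpr ?_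
      filter_upwards [mulChar_coeFn N (f : L2T n), mulL2_coeFn φ hφ (f : L2T n)] with z h1 h2
      show φ z * (mulChar N (f : L2T n)) z = charFn n N z * u z
      rw [h1, h2]
      ring
    have hTfs : T fs = Submodule.orthogonalProjectionOnto (hardySpace n) w := by rw [hT fs, hwu]
    have hpyth := Submodule.norm_sq_eq_add_norm_sq_projection w (hardySpace n)
    have hP1 : ‖Submodule.orthogonalProjectionOnto (hardySpace n) w‖ ≤ ‖(f : L2T n)‖ := by
      rw [← hTfs]
      calc ‖T fs‖ ≤ ‖T‖ * ‖fs‖ := T.le_opNorm fs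
        _ ≤ 1 * ‖fs‖ := by
            have : (0:ℝ) ≤ ‖fs‖ := norm_nonneg _
            nlinarith
        _ = ‖(f : L2T n)‖ := by
            rw [one_mul]
            show ‖(fs : L2T n)‖ = ‖(f : L2T n)‖
            exact norm_mulChar N _
    set v : L2T n := (Submodule.orthogonalProjectionOnto ((hardySpace n)ᗮ) w : L2T n) with hvdef
    have hveq : ‖Submodule.orthogonalProjectionOnto ((hardySpace n)ᗮ) w‖ = ‖v‖ := rfl
    have hvmem : v ∈ (Submodule.span ℂ (Set.range (badChar n))).topologicalClosure := by
      rw [← hardySpace_orthogonal_eq_closure]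
      exact (Submodule.orthogonalProjectionOnto ((hardySpace n)ᗮ) w).2
    have hbound := norm_sq_le_tsum_inner (badChar n) (orthonormal_badChar n) v hvmem
    have hcoeff : ∀ k : badSet n, (inner ℂ (badChar n k) v : ℂ) = inner ℂ (charLp2 n (↑k - N)) u := by
      intro k
      have hval : v = w - ↑(Submodule.orthogonalProjectionOnto (hardySpace n) w) :=
        Submodule.starProjection_orthogonal_val (K := hardySpace n) w
      have hzero : (inner ℂ (charLp2 n ↑k) (↑(Submodule.orthogonalProjectionOnto (hardySpace n) w) : L2T n) : ℂ)
          = 0 := by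
        rw [← mFourierCoeff_eq_inner]
        exact (Submodule.orthogonalProjectionOnto (hardySpace n) w).2 ↑k k.2
      rw [hval, inner_sub_right]
      simp only [badChar]
      rw [hzero, sub_zero, hwdef, inner_charLp2_mulChar]
    have hmemF : ∀ k : badSet n, (↑k - N : Fin n → ℤ) ∈ ((↑F : Set (Fin n → ℤ))ᶜ) := by
      intro k
      intro hmem
      obtain ⟨i, hi⟩ := k.2
      have hmem' : (↑k - N : Fin n → ℤ) ∈ F := hmem
      have h5 := hMlt _ hmem' i
      have hsub : ((↑k : Fin n → ℤ) - N) i = (↑k : Fin n → ℤ) i - (M:ℤ) := rfl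
      rw [hsub] at h5
      have hMnn : (0:ℤ) ≤ (M:ℤ) := Int.natCast_nonneg M
      linarith
    have hsum2 : ∑' (k : badSet n), ‖(inner ℂ (badChar n k) v : ℂ)‖ ^ 2
        ≤ ∑' (x : ↑((↑F : Set (Fin n → ℤ))ᶜ)), a ↑x := by
      have hinj : Function.Injective
          (fun k : badSet n => (⟨↑k - N, hmemF k⟩ : ↑((↑F : Set (Fin n → ℤ))ᶜ))) := by
        intro k k' h
        have h1 : (↑k : Fin n → ℤ) - N = ↑k' - N := congrArg Subtype.val h
        have h2 : (↑k : Fin n → ℤ) = ↑k' := by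
          funext i
          have h6 := congrFun h1 i
          have e1 : ((↑k : Fin n → ℤ) - N) i = (↑k : Fin n → ℤ) i - N i := rfl
          have e2 : ((↑k' : Fin n → ℤ) - N) i = (↑k' : Fin n → ℤ) i - N i := rfl
          rw [e1, e2] at h6
          linarith
        exact Subtype.ext h2
      refine Summable.tsum_le_tsum_of_inj _ hinj (fun c _ => sq_nonneg _)
        (fun k => le_of_eq ?_)
        ((orthonormal_badChar n).inner_products_summable v) (ha.subtype _)
      show ‖(inner ℂ (badChar n k) v : ℂ)‖ ^ 2 = a (↑k - N)
      rw [hcoeff k]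
    have hnw : ‖u‖ = ‖w‖ := (norm_mulChar N u).symm
    have hu2 : ‖u‖ ^ 2 = ‖w‖ ^ 2 := by rw [hnw]
    have hpyth2 : ‖w‖ ^ 2 = ‖Submodule.orthogonalProjectionOnto (hardySpace n) w‖ ^ 2 + ‖v‖ ^ 2 := by
      rw [hpyth, hveq]
    have hPsq : ‖Submodule.orthogonalProjectionOnto (hardySpace n) w‖ ^ 2 ≤ ‖(f : L2T n)‖ ^ 2 :=
      pow_le_pow_left₀ (norm_nonneg _) hP1 2
    have hvv : ‖v‖ ^ 2 < ε := lt_of_le_of_lt (hbound.trans hsum2) htail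
    linarith
  have h2 : ‖u‖ ^ 2 ≤ ‖(f : L2T n)‖ ^ 2 := le_of_forall_pos_le_add key
  nlinarith [norm_nonneg u, norm_nonneg (f : L2T n)]

section OpTheory

variable {H : Type*} [NormedAddCommGroup H] [InnerProductSpace ℂ H] [CompleteSpace H]

theorem partialIsometry_proj_ker (T : H →L[ℂ] H) (x : H) :
    T x = T ↑(Submodule.orthogonalProjectionOnto (LinearMap.ker (T : H →ₗ[ℂ] H))ᗮ x) := by
  haveI : CompleteSpace (LinearMap.ker (T : H →ₗ[ℂ] H)) := (ContinuousLinearMap.isClosed_ker T).completeSpace_coe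
  have hx0 : x - ↑(Submodule.orthogonalProjectionOnto (LinearMap.ker (T : H →ₗ[ℂ] H))ᗮ x) ∈ ((LinearMap.ker (T : H →ₗ[ℂ] H))ᗮ)ᗮ :=
    Submodule.sub_starProjection_mem_orthogonal (K := (LinearMap.ker (T : H →ₗ[ℂ] H))ᗮ) x
  rw [Submodule.orthogonal_orthogonal] at hx0
  have : T (x - ↑(Submodule.orthogonalProjectionOnto (LinearMap.ker (T : H →ₗ[ℂ] H))ᗮ x)) = 0 := hx0
  rw [map_sub, sub_eq_zero] at this
  exact this

theorem partialIsometry_norm_le (T : H →L[ℂ] H) (hPI : IsPartialIsometryOp T) : ‖T‖ ≤ 1 := by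
  refine ContinuousLinearMap.opNorm_le_bound T zero_le_one fun x => ?_
  haveI : CompleteSpace (LinearMap.ker (T : H →ₗ[ℂ] H)) := (ContinuousLinearMap.isClosed_ker T).completeSpace_coe
  rw [partialIsometry_proj_ker T x, hPI _ (Submodule.orthogonalProjectionOnto (LinearMap.ker (T : H →ₗ[ℂ] H))ᗮ x).2, one_mul]
  calc ‖(↑(Submodule.orthogonalProjectionOnto (LinearMap.ker (T : H →ₗ[ℂ] H))ᗮ x) : H)‖
      ≤ ‖Submodule.orthogonalProjectionOnto (LinearMap.ker (T : H →ₗ[ℂ] H))ᗮ‖ * ‖x‖ :=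
        (Submodule.orthogonalProjectionOnto (LinearMap.ker (T : H →ₗ[ℂ] H))ᗮ).le_opNorm x
    _ ≤ 1 * ‖x‖ := by
        have h := Submodule.orthogonalProjectionOnto_norm_le (LinearMap.ker (T : H →ₗ[ℂ] H))ᗮ
        have := norm_nonneg x
        nlinarith
    _ = ‖x‖ := one_mul _

theorem partialIsometry_adjoint_norm (T : H →L[ℂ] H) (hPI : IsPartialIsometryOp T)
    {f : H} (hf : f ∈ LinearMap.range (T : H →ₗ[ℂ] H)) : ‖ContinuousLinearMap.adjoint T f‖ = ‖f‖ := by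
  obtain ⟨g, rfl⟩ := hf
  haveI : CompleteSpace (LinearMap.ker (T : H →ₗ[ℂ] H)) := (ContinuousLinearMap.isClosed_ker T).completeSpace_coe
  set K := (LinearMap.ker (T : H →ₗ[ℂ] H))ᗮ with hKdef
  let ι : K →ₗᵢ[ℂ] H := ⟨T.toLinearMap.comp K.subtype, fun x => hPI x x.2⟩
  set g₁ := Submodule.orthogonalProjectionOnto K g with hg₁
  have hTg : T g = T ↑g₁ := partialIsometry_proj_ker T g
  have hadj : ContinuousLinearMap.adjoint T (T ↑g₁) = ↑g₁ := by
    apply ext_inner_left ℂ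
    intro h
    rw [ContinuousLinearMap.adjoint_inner_right]
    set h₁ := Submodule.orthogonalProjectionOnto K h with hh₁
    have hTh : T h = T ↑h₁ := partialIsometry_proj_ker T h
    rw [hTh]
    have hmap : (inner ℂ (T ↑h₁) (T ↑g₁) : ℂ) = inner ℂ (↑h₁ : H) (↑g₁ : H) := by
      have h2 := ι.inner_map_map h₁ g₁
      exact h2
    rw [hmap]
    have hperp : (inner ℂ (h - ↑h₁) (↑g₁ : H) : ℂ) = 0 :=
      Submodule.inner_left_of_mem_orthogonal g₁.2
        (Submodule.sub_starProjection_mem_orthogonal (K := K) h)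
    have : (inner ℂ h (↑g₁ : H) : ℂ) = inner ℂ (↑h₁ : H) (↑g₁ : H) := by
      have hdec : h = (h - ↑h₁) + ↑h₁ := by abel
      rw [hdec, inner_add_left, hperp, zero_add]
    rw [← this]
  rw [show (T : H →ₗ[ℂ] H) g = T g from rfl, hTg, hadj]
  exact (hPI _ g₁.2).symm

end OpTheory

theorem memℒp_conj {n : ℕ} {φ : Torus n → ℂ} (hφ : MemLp φ ⊤ (volume : Measure (Torus n))) :
    MemLp (fun z => (starRingEnd ℂ) (φ z)) ⊤ (volume : Measure (Torus n)) := by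
  refine ⟨Continuous.comp_aestronglyMeasurable continuous_star hφ.1, ?_⟩
  have : eLpNorm (fun z => (starRingEnd ℂ) (φ z)) ⊤ (volume : Measure (Torus n))
      = eLpNorm φ ⊤ (volume : Measure (Torus n)) :=
    eLpNorm_congr_norm_ae (Eventually.of_forall fun z => by
      rw [RCLike.norm_conj])
  rw [this]
  exact hφ.2

theorem adjoint_toeplitz {n : ℕ} (φ : Torus n → ℂ)
    (hφ : MemLp φ ⊤ (volume : Measure (Torus n)))
    (hφc : MemLp (fun z => (starRingEnd ℂ) (φ z)) ⊤ (volume : Measure (Torus n)))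
    (T : HardyH n →L[ℂ] HardyH n) (hT : IsToeplitz φ hφ T) (h : HardyH n) :
    ContinuousLinearMap.adjoint T h
      = Submodule.orthogonalProjectionOnto (hardySpace n)
          (mulL2 (fun z => (starRingEnd ℂ) (φ z)) hφc (h : L2T n)) := by
  apply ext_inner_left ℂ
  intro g
  rw [ContinuousLinearMap.adjoint_inner_right, hT g]
  rw [Submodule.coe_inner, Submodule.coe_inner]
  rw [← Submodule.starProjection_apply, Submodule.inner_starProjection_left_eq_right,
    Submodule.starProjection_mem_subspace_eq_self]
  have hrhs : (inner ℂ ((g : L2T n))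
      ((Submodule.orthogonalProjectionOnto (hardySpace n)
        (mulL2 (fun z => (starRingEnd ℂ) (φ z)) hφc (h : L2T n)) : HardyH n) : L2T n) : ℂ)
      = inner ℂ ((g : L2T n)) (mulL2 (fun z => (starRingEnd ℂ) (φ z)) hφc (h : L2T n)) := by
    rw [← inner_conj_symm, ← Submodule.starProjection_apply, Submodule.inner_starProjection_left_eq_right,
        Submodule.starProjection_mem_subspace_eq_self, inner_conj_symm]
  rw [hrhs]
  rw [MeasureTheory.L2.inner_def, MeasureTheory.L2.inner_def]
  refine integral_congr_ae ?_
  filter_upwards [mulL2_coeFn φ hφ (g : L2T n),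
    mulL2_coeFn (fun z => (starRingEnd ℂ) (φ z)) hφc (h : L2T n)] with z h1 h2
  rw [RCLike.inner_apply, RCLike.inner_apply, h1, h2]
  simp only [map_mul]
  ring

/-- equation (3.1). If `T_φ` is a partial isometry and `f` is in the range
of `T_φ`, then `conj φ · f ∈ H²(𝕋^n)`: all Fourier coefficients of `conj φ · f` with an
index having a negative coordinate vanish. -/
theorem stmt6 (n : ℕ) (hn : 1 ≤ n) (φ : Torus n → ℂ)
    (hφ : MemLp φ ⊤ (volume : Measure (Torus n)))
    (hφ0 : ¬ φ =ᵐ[(volume : Measure (Torus n))] (0 : Torus n → ℂ))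
    (T : HardyH n →L[ℂ] HardyH n) (hT : IsToeplitz φ hφ T)
    (hPI : IsPartialIsometryOp T) :
    ∀ f : HardyH n, f ∈ LinearMap.range (T : HardyH n →ₗ[ℂ] HardyH n) →
      ∀ k : Fin n → ℤ, (∃ i, k i < 0) →
        mFourierCoeff (fun z => (starRingEnd ℂ) (φ z) * repFn f z) k = 0 := by
  intro f hf k hk
  have hφc := memℒp_conj hφ
  set u' : L2T n := mulL2 (fun z => (starRingEnd ℂ) (φ z)) hφc (f : L2T n) with hu'
  have hadj := adjoint_toeplitz φ hφ hφc T hT f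
  have hTnorm : ‖T‖ ≤ 1 := partialIsometry_norm_le T hPI
  have h1 : ‖ContinuousLinearMap.adjoint T f‖ = ‖f‖ := partialIsometry_adjoint_norm T hPI hf
  have h2 : ‖Submodule.orthogonalProjectionOnto (hardySpace n) u'‖ = ‖f‖ := by
    rw [← hadj]
    exact h1
  have hfn : ‖f‖ = ‖(f : L2T n)‖ := rfl
  have h3 : ‖u'‖ ≤ ‖(f : L2T n)‖ := by
    have e : ‖u'‖ = ‖mulL2 φ hφ (f : L2T n)‖ := by
      rw [Lp.norm_def, Lp.norm_def]
      congr 1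
      rw [eLpNorm_congr_ae (mulL2_coeFn _ hφc (f : L2T n)),
        eLpNorm_congr_ae (mulL2_coeFn φ hφ (f : L2T n))]
      refine eLpNorm_congr_norm_ae (Eventually.of_forall fun z => ?_)
      rw [norm_mul, norm_mul, RCLike.norm_conj]
    rw [e]
    exact multiplier_norm_le φ hφ T hT hTnorm f
  have h5 : ‖Submodule.orthogonalProjectionOnto (hardySpace n) u'‖ ≤ ‖u'‖ := by
    calc ‖Submodule.orthogonalProjectionOnto (hardySpace n) u'‖
        ≤ ‖Submodule.orthogonalProjectionOnto (hardySpace n)‖ * ‖u'‖ :=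
          (Submodule.orthogonalProjectionOnto (hardySpace n)).le_opNorm u'
      _ ≤ 1 * ‖u'‖ := by
          have := Submodule.orthogonalProjectionOnto_norm_le (hardySpace n)
          have := norm_nonneg u'
          nlinarith
      _ = ‖u'‖ := one_mul _
  have heq : ‖u'‖ = ‖Submodule.orthogonalProjectionOnto (hardySpace n) u'‖ := by
    rw [h2, hfn]
    exact le_antisymm h3 (by rw [← hfn, ← h2]; exact h5)
  have hpyth := Submodule.norm_sq_eq_add_norm_sq_projection u' (hardySpace n)
  have hv0 : ‖Submodule.orthogonalProjectionOnto ((hardySpace n)ᗮ) u'‖ = 0 := by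
    have hsq : ‖Submodule.orthogonalProjectionOnto ((hardySpace n)ᗮ) u'‖ ^ 2 = 0 := by
      rw [heq] at hpyth
      linarith
    have := sq_eq_zero_iff.mp hsq
    exact this
  have hvz : (↑(Submodule.orthogonalProjectionOnto ((hardySpace n)ᗮ) u') : L2T n) = 0 := by
    have : Submodule.orthogonalProjectionOnto ((hardySpace n)ᗮ) u' = 0 := norm_eq_zero.mp hv0
    rw [this]
    rfl
  have hmem : u' ∈ hardySpace n := by
    have hval : (↑(Submodule.orthogonalProjectionOnto ((hardySpace n)ᗮ) u') : L2T n)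
        = u' - ↑(Submodule.orthogonalProjectionOnto (hardySpace n) u') :=
      Submodule.starProjection_orthogonal_val (K := hardySpace n) u'
    have : u' = ↑(Submodule.orthogonalProjectionOnto (hardySpace n) u') := by
      rw [hvz] at hval
      have := hval.symm
      rwa [sub_eq_zero] at this
    rw [this]
    exact (Submodule.orthogonalProjectionOnto (hardySpace n) u').2
  have hcongr : (fun z => (starRingEnd ℂ) (φ z) * repFn f z)
      =ᵐ[(volume : Measure (Torus n))] ⇑u' :=
    (mulL2_coeFn (fun z => (starRingEnd ℂ) (φ z)) hφc (f : L2T n)).symm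
  rw [mFourierCoeff_congr hcongr k]
  exact hmem k hk

end
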